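/- Let T be a commutative ring, finite and free as a Z-module, D a positive integer, T^(D) ⊆ T a subring such that T is integral over T^(D), and let f : T^(D) → F̄_p be a ring homomorphism. Then there exists a number field K with ring of integers O_K, a prime ideal q of O_K above p, and a ring homomorphism g : T → O_K, such that the composition T^(D) ↪ T → O_K → O_K/q ↪ F̄_p equals f. (Deligne–Serre lifting lemma, Hecke-algebra form.) -/

import Mathlib

open Polynomial

/-- A ring hom from a domain all of whose elements are integral over `ℤ` into a
characteristic-zero field is injective. -/
lemma aux_inj {A F : Type*} [CommRing A] [IsDomain A] [Field F] [CharZero F]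
    (χ : A →+* F) (hA : ∀ a : A, IsIntegral ℤ a) : Function.Injective χ := by
  rw [injective_iff_map_eq_zero]
  intro a ha
  by_contra hne
  obtain ⟨P, hPm, hP0⟩ := hA a
  have key : ∀ n (P : ℤ[X]), P.Monic → P.natDegree = n → Polynomial.aeval a P = 0 → False := by
    intro n
    induction n with
    | zero =>
      intro P hm hdeg h0
      have hP1 : P = 1 := hm.natDegree_eq_zero.mp hdeg
      rw [hP1, map_one] at h0
      exact one_ne_zero h0
    | succ n ih =>
      intro P hm hdeg h0
      have h1 : χ (Polynomial.aeval a P) = 0 := by rw [h0, map_zero]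
      have h2 : Polynomial.eval₂ (χ.comp (algebraMap ℤ A)) (χ a) P = 0 := by
        rw [← Polynomial.hom_eval₂]; exact h1
      rw [ha, Polynomial.eval₂_at_zero] at h2
      have h3 : P.coeff 0 = 0 := by
        have : ((P.coeff 0 : ℤ) : F) = 0 := by
          rw [← h2]; simp
        exact_mod_cast this
      have h5 : Polynomial.aeval a P.divX = 0 := by
        have h4 : Polynomial.aeval a P = a * Polynomial.aeval a P.divX := by
          conv_lhs => rw [← Polynomial.X_mul_divX_add P]
          rw [h3, map_zero, add_zero, map_mul, Polynomial.aeval_X]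
        rw [h0] at h4
        rcases mul_eq_zero.mp h4.symm with h | h
        · exact absurd h hne
        · exact h
      have hdeg' : P.divX.natDegree = n := by
        rw [Polynomial.natDegree_divX_eq_natDegree_tsub_one, hdeg]; omega
      have hm' : P.divX.Monic := by
        have : P.divX.coeff n = 1 := by
          rw [Polynomial.coeff_divX, ← hdeg]
          exact hm
        rwa [Polynomial.Monic, Polynomial.leadingCoeff, hdeg']
      exact ih P.divX hm' hdeg' h5
  exact key P.natDegree P hPm rfl hP0

/-- The kernel of a ring hom from a ring integral over `ℤ` to `F̄_p` is maximal. -/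
lemma aux_ker_max (p : ℕ) [Fact p.Prime] {R : Type*} [CommRing R]
    (h : ∀ x : R, IsIntegral ℤ x) (f : R →+* AlgebraicClosure (ZMod p)) :
    (RingHom.ker f).IsMaximal := by
  have hker : RingHom.ker f ≠ ⊤ := by
    intro h1
    have h2 : f 1 = 0 := by
      have : (1 : R) ∈ RingHom.ker f := h1 ▸ Submodule.mem_top
      exact this
    rw [map_one] at h2
    exact one_ne_zero h2
  haveI : Nontrivial (R ⧸ RingHom.ker f) := Ideal.Quotient.nontrivial_iff.mpr hker
  have hinj := RingHom.kerLift_injective f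
  haveI : IsDomain (R ⧸ RingHom.ker f) := Function.Injective.isDomain _ hinj
  have hp0 : ((p : ℕ) : R ⧸ RingHom.ker f) = 0 := by
    apply hinj
    rw [map_natCast, map_zero, CharP.cast_eq_zero]
  have hchar : ringChar (R ⧸ RingHom.ker f) = p := by
    rcases (Fact.out : p.Prime).eq_one_or_self_of_dvd _ ((ringChar.spec (R ⧸ RingHom.ker f) p).mp hp0) with h1 | h1
    · exact absurd h1 (CharP.char_ne_one (R ⧸ RingHom.ker f) (ringChar (R ⧸ RingHom.ker f)))
    · exact h1
  haveI : CharP (R ⧸ RingHom.ker f) p := ringChar.of_eq hchar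
  letI : Algebra (ZMod p) (R ⧸ RingHom.ker f) := ZMod.algebra _ p
  haveI : IsScalarTower ℤ (ZMod p) (R ⧸ RingHom.ker f) :=
    IsScalarTower.of_algebraMap_eq' (RingHom.ext_int _ _)
  haveI : Algebra.IsIntegral (ZMod p) (R ⧸ RingHom.ker f) := by
    refine ⟨fun x => ?_⟩
    obtain ⟨r, rfl⟩ := Ideal.Quotient.mk_surjective x
    exact ((h r).map (Ideal.Quotient.mkₐ ℤ _)).tower_top
  have hfield : IsField (R ⧸ RingHom.ker f) :=
    (Algebra.IsIntegral.isField_iff_isField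
      (R := ZMod p) (S := R ⧸ RingHom.ker f) (RingHom.injective _)).mp (Field.toIsField _)
  exact Ideal.Quotient.maximal_of_isField _ hfield

/-- An element of a minimal prime of a commutative ring is a zero divisor. -/
lemma aux_min_prime {R : Type*} [CommRing R] {P : Ideal R}
    (hP : P ∈ minimalPrimes R) {x : R} (hx : ∀ y : R, x * y = 0 → y = 0)
    (hmem : x ∈ P) : False := by
  haveI := hP.1.1
  have hxpow : ∀ (n : ℕ) (y : R), x ^ n * y = 0 → y = 0 := by
    intro n
    induction n with
    | zero => intro y hy; simpa using hy
    | succ n ih => intro y hy; exact ih y (hx _ (by rw [← hy]; ring))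
  set M := Submonoid.powers x ⊔ P.primeCompl with hM
  have h0 : Disjoint ((⊥ : Ideal R) : Set R) (M : Set R) := by
    rw [Set.disjoint_left]
    rintro y hy hyM
    have hy0 : y = 0 := hy
    obtain ⟨a, ⟨n, rfl⟩, b, hb, hab⟩ := Submonoid.mem_sup.mp hyM
    have hb0 : b = 0 := hxpow n b (by rw [hab, hy0])
    exact hb (hb0 ▸ P.zero_mem)
  obtain ⟨q, hq, -, hdisj⟩ := Ideal.exists_le_prime_disjoint ⊥ M h0
  have hqle : q ≤ P := by
    intro z hz
    by_contra hzP
    exact Set.disjoint_left.mp hdisj hz (Submonoid.mem_sup_right hzP)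
  have hPq : P ≤ q := hP.2 ⟨hq, bot_le⟩ hqle
  exact Set.disjoint_left.mp hdisj (hPq hmem)
    (Submonoid.mem_sup_left (Submonoid.mem_powers x))

/-- Extension of ring homs into an algebraically closed field along an
injective integral ring extension, when the kernel is maximal. -/
lemma aux_extend {R S : Type*} [CommRing R] [CommRing S] [Algebra R S]
    [Algebra.IsIntegral R S] (hinj : Function.Injective (algebraMap R S))
    (F : Type*) [Field F] [IsAlgClosed F]
    (f : R →+* F) (hf : (RingHom.ker f).IsMaximal) :
    ∃ g : S →+* F, g.comp (algebraMap R S) = f := by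
  obtain ⟨Q, hQmax, hQ⟩ := Ideal.exists_ideal_over_maximal_of_isIntegral (RingHom.ker f)
    (by rw [(RingHom.injective_iff_ker_eq_bot _).mp hinj]; exact bot_le)
  letI kField : Field (R ⧸ RingHom.ker f) := Ideal.Quotient.field _
  letI LField : Field (S ⧸ Q) := @Ideal.Quotient.field _ _ Q hQmax
  let ρ : R ⧸ RingHom.ker f →+* S ⧸ Q := Ideal.quotientMap Q (algebraMap R S) hQ.ge
  letI : Algebra (R ⧸ RingHom.ker f) (S ⧸ Q) := ρ.toAlgebra
  haveI : IsScalarTower R (R ⧸ RingHom.ker f) (S ⧸ Q) := by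
    refine IsScalarTower.of_algebraMap_eq' ?_
    ext r
    show Ideal.Quotient.mk Q (algebraMap R S r) = ρ (Ideal.Quotient.mk _ r)
    rw [Ideal.quotientMap_mk]
  haveI : Algebra.IsAlgebraic (R ⧸ RingHom.ker f) (S ⧸ Q) := by
    refine ⟨fun x => ?_⟩
    obtain ⟨s, rfl⟩ := Ideal.Quotient.mk_surjective x
    exact (((Algebra.IsIntegral.isIntegral (R := R) s).map
      (Ideal.Quotient.mkₐ R Q)).tower_top).isAlgebraic
  letI : Algebra (R ⧸ RingHom.ker f) F := (RingHom.kerLift f).toAlgebra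
  haveI : Module.IsTorsionFree (R ⧸ RingHom.ker f) (S ⧸ Q) :=
    Module.isTorsionFree_iff_algebraMap_injective.mpr (RingHom.injective _)
  haveI : Module.IsTorsionFree (R ⧸ RingHom.ker f) F :=
    Module.isTorsionFree_iff_algebraMap_injective.mpr (RingHom.injective _)
  let Φ : (S ⧸ Q) →ₐ[R ⧸ RingHom.ker f] F := IsAlgClosed.lift
  refine ⟨Φ.toRingHom.comp (Ideal.Quotient.mk Q), ?_⟩
  ext r
  show Φ (Ideal.Quotient.mk Q (algebraMap R S r)) = f r
  have h1 : (Ideal.Quotient.mk Q) (algebraMap R S r)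
      = algebraMap (R ⧸ RingHom.ker f) (S ⧸ Q) (Ideal.Quotient.mk _ r) :=
    (Ideal.quotientMap_mk (H := hQ.ge) (x := r)).symm
  rw [h1, Φ.commutes]
  exact RingHom.kerLift_mk f r

/-!
STATEMENT 11 (Deligne–Serre lifting lemma, Hecke algebra form): Let T be a commutative
ring, finite and free as a ℤ-module, T^(D) ⊆ T a subring over which T is integral, and
f : T^(D) → F̄_p a ring homomorphism.  Then there are a number field K with ring of
integers O_K = integralClosure ℤ K, a maximal ideal q of O_K above p, a ring
homomorphism g : T → O_K and an embedding O_K/q ↪ F̄_p such that the composition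
T^(D) ↪ T → O_K → O_K/q ↪ F̄_p equals f.
-/
set_option maxHeartbeats 1000000 in
theorem stmt11 (p : ℕ) [Fact p.Prime]
    (T : Type) [CommRing T] [Module.Free ℤ T] [Module.Finite ℤ T]
    (T' : Subring T) (hint : ∀ x : T, IsIntegral T' x)
    (f : T' →+* AlgebraicClosure (ZMod p)) :
    ∃ (K : Type) (_ : Field K) (_ : NumberField K)
      (q : Ideal (integralClosure ℤ K))
      (g : T →+* integralClosure ℤ K)
      (ι : (integralClosure ℤ K) ⧸ q →+* AlgebraicClosure (ZMod p)),
      q.IsMaximal ∧ (p : integralClosure ℤ K) ∈ q ∧ Function.Injective ι ∧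
      ∀ x : T', ι (Ideal.Quotient.mk q (g (x : T))) = f x := by
  haveI : Nontrivial T := by
    rcases subsingleton_or_nontrivial T with hs | h
    · exfalso
      have h10 : (1 : T') = 0 := Subtype.ext (Subsingleton.elim _ _)
      have h2 := f.map_one
      rw [h10, map_zero] at h2
      exact one_ne_zero h2.symm
    · exact h
  haveI : Algebra.IsIntegral ℤ T := Algebra.IsIntegral.of_finite ℤ T
  have hsub_inj : Function.Injective (algebraMap T' T) := fun a b h => Subtype.ext h
  have hT'int : ∀ x : T', IsIntegral ℤ x := fun x =>
    IsIntegral.tower_bot (A := T') (B := T) hsub_inj (Algebra.IsIntegral.isIntegral _)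
  haveI : Algebra.IsIntegral T' T := ⟨hint⟩
  -- extend f to all of T
  obtain ⟨Fh, hFh⟩ := aux_extend hsub_inj (AlgebraicClosure (ZMod p)) f (aux_ker_max p hT'int f)
  haveI hmmax : (RingHom.ker Fh).IsMaximal :=
    aux_ker_max p (fun x => Algebra.IsIntegral.isIntegral x) Fh
  haveI : (RingHom.ker Fh).IsPrime := hmmax.isPrime
  -- pick a minimal prime below it
  obtain ⟨P, hPmin, hPle⟩ := Ideal.exists_minimalPrimes_le (I := ⊥) (J := RingHom.ker Fh) bot_le
  haveI hPp : P.IsPrime := hPmin.1.1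
  have hPmin' : P ∈ minimalPrimes T := hPmin
  -- nonzero integers are not zero divisors in T
  have hnz : ∀ (n : ℤ), n ≠ 0 → ∀ y : T, (n : T) * y = 0 → y = 0 := by
    intro n hn y hy
    have h1 : n • y = 0 := by rw [zsmul_eq_mul]; exact hy
    rcases smul_eq_zero.mp h1 with h | h
    · exact absurd h hn
    · exact h
  have hZP : ∀ n : ℤ, (n : T) ∈ P → n = 0 := by
    intro n hn
    by_contra h
    exact aux_min_prime hPmin' (hnz n h) hn
  -- the characteristic-zero quotient A = T ⧸ P
  haveI : IsDomain (T ⧸ P) := Ideal.Quotient.isDomain P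
  have hZA : Function.Injective (algebraMap ℤ (T ⧸ P)) := by
    intro a b hab
    have h1 : ((a - b : ℤ) : T) ∈ P := by
      rw [← Ideal.Quotient.eq_zero_iff_mem]
      have h2 : (Ideal.Quotient.mk P) ((a - b : ℤ) : T) = algebraMap ℤ (T ⧸ P) (a - b) := by
        rw [map_intCast]
        exact (eq_intCast (algebraMap ℤ (T ⧸ P)) _).symm
      rw [h2, map_sub, hab, sub_self]
    have := hZP _ h1
    omega
  haveI : Module.IsTorsionFree ℤ (T ⧸ P) := Module.isTorsionFree_iff_algebraMap_injective.mpr hZA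
  haveI : CharZero (T ⧸ P) := charZero_of_injective_algebraMap hZA
  haveI : Module.Finite ℤ (T ⧸ P) :=
    Module.Finite.of_surjective (Ideal.Quotient.mkₐ ℤ P).toLinearMap Ideal.Quotient.mk_surjective
  haveI : Algebra.IsIntegral ℤ (T ⧸ P) := Algebra.IsIntegral.of_finite ℤ (T ⧸ P)
  haveI : Module.IsTorsionFree ℤ (AlgebraicClosure ℚ) :=
    Module.isTorsionFree_iff_algebraMap_injective.mpr (by
      intro a b hab
      rw [eq_intCast (algebraMap ℤ (AlgebraicClosure ℚ)) a,
        eq_intCast (algebraMap ℤ (AlgebraicClosure ℚ)) b] at hab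
      exact Int.cast_injective hab)
  -- embed A into the algebraic closure of ℚ
  let χ : (T ⧸ P) →ₐ[ℤ] AlgebraicClosure ℚ := IsAlgClosed.lift
  have hχinj : Function.Injective χ :=
    aux_inj χ.toRingHom (fun a => Algebra.IsIntegral.isIntegral a)
  -- the number field K
  obtain ⟨s, hs⟩ := Module.finite_def.mp (inferInstance : Module.Finite ℤ (T ⧸ P))
  let K : IntermediateField ℚ (AlgebraicClosure ℚ) :=
    IntermediateField.adjoin ℚ (χ '' (s : Set (T ⧸ P)))
  haveI : FiniteDimensional ℚ K := by
    apply IntermediateField.finiteDimensional_adjoin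
    rintro x ⟨a, -, rfl⟩
    have h1 : IsIntegral ℤ (χ a) := (Algebra.IsIntegral.isIntegral a).map χ
    exact h1.tower_top
  haveI : NumberField ↥K := ⟨⟩
  -- the image of A lies in K
  have hmemK : ∀ a : T ⧸ P, χ a ∈ K := by
    intro a
    have ha : a ∈ Submodule.span ℤ (s : Set (T ⧸ P)) := by rw [hs]; exact Submodule.mem_top
    refine Submodule.span_induction ?_ ?_ ?_ ?_ ha
    · intro x hx
      exact IntermediateField.subset_adjoin ℚ _ ⟨x, hx, rfl⟩
    · rw [map_zero]; exact zero_mem K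
    · intro x y _ _ hx hy
      rw [map_add]; exact add_mem hx hy
    · intro n x _ hx
      rw [map_zsmul]; exact zsmul_mem hx n
  -- the map into the ring of integers of K
  have hintK : ∀ a : T ⧸ P, IsIntegral ℤ ((⟨χ a, hmemK a⟩ : K) : ↥K) := by
    intro a
    have h1 : IsIntegral ℤ (χ a) := (Algebra.IsIntegral.isIntegral a).map χ
    have h2 : algebraMap ↥K (AlgebraicClosure ℚ) (⟨χ a, hmemK a⟩ : ↥K) = χ a := rfl
    rw [← h2] at h1
    exact (isIntegral_algebraMap_iff (RingHom.injective _)).mp h1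
  let ψ₀ : (T ⧸ P) →+* ↥K := RingHom.codRestrict χ.toRingHom K hmemK
  let ψ : (T ⧸ P) →+* ↥(integralClosure ℤ ↥K) :=
    RingHom.codRestrict ψ₀ (integralClosure ℤ ↥K) (fun a => hintK a)
  letI : Algebra (T ⧸ P) ↥(integralClosure ℤ ↥K) := ψ.toAlgebra
  haveI : IsScalarTower ℤ (T ⧸ P) ↥(integralClosure ℤ ↥K) :=
    IsScalarTower.of_algebraMap_eq' (RingHom.ext_int _ _)
  haveI : Algebra.IsIntegral (T ⧸ P) ↥(integralClosure ℤ ↥K) :=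
    ⟨fun x => (integralClosure.isIntegral x).tower_top⟩
  have hψinj : Function.Injective ψ := by
    intro a b hab
    apply hχinj
    exact congrArg (fun z : ↥(integralClosure ℤ ↥K) => ((z : ↥K) : AlgebraicClosure ℚ)) hab
  -- the reduction map A → F̄_p and its extension to O_K
  let Abar : (T ⧸ P) →+* AlgebraicClosure (ZMod p) :=
    Ideal.Quotient.lift P Fh (fun r hr => hPle hr)
  have hAbarmax : (RingHom.ker Abar).IsMaximal :=
    aux_ker_max p (fun a => Algebra.IsIntegral.isIntegral a) Abar
  obtain ⟨Φ, hΦ⟩ := aux_extend (R := T ⧸ P) (S := ↥(integralClosure ℤ ↥K)) hψinj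
    (AlgebraicClosure (ZMod p)) Abar hAbarmax
  refine ⟨↥K, inferInstance, inferInstance, RingHom.ker Φ,
    ψ.comp (Ideal.Quotient.mk P), RingHom.kerLift Φ,
    aux_ker_max p (fun x => integralClosure.isIntegral x) Φ, ?_, RingHom.kerLift_injective Φ, ?_⟩
  · show Φ ((p : ℕ) : ↥(integralClosure ℤ ↥K)) = 0
    rw [map_natCast]
    exact CharP.cast_eq_zero _ p
  · intro x
    show RingHom.kerLift Φ (Ideal.Quotient.mk _ (ψ (Ideal.Quotient.mk P (x : T)))) = f x
    rw [RingHom.kerLift_mk]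
    have h1 : Φ (ψ (Ideal.Quotient.mk P (x : T))) = Abar (Ideal.Quotient.mk P (x : T)) :=
      RingHom.congr_fun hΦ _
    have h2 : Abar (Ideal.Quotient.mk P (x : T)) = Fh (x : T) := Ideal.Quotient.lift_mk _ _ _
    rw [h1, h2]
    exact RingHom.congr_fun hFh x
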